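/- Let k be a field, f ∈ k[x,y,z] homogeneous of degree d, and ν₁, ν₂, ν₃ nonnegative integers with ν₂+ν₃ ≤ d, ν₁+ν₃ ≤ d and ν₁+ν₂ ≤ d. If f ∈ (y,z)^{ν₁} ∩ (x,z)^{ν₂} ∩ (x,y)^{ν₃}, then σ(f) = x^{ν₁} y^{ν₂} z^{ν₃} · g for a (unique) homogeneous polynomial g of degree 2d − ν₁ − ν₂ − ν₃ satisfying g ∈ (y,z)^{d−ν₂−ν₃} ∩ (x,z)^{d−ν₁−ν₃} ∩ (x,y)^{d−ν₁−ν₂}. -/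

import Mathlib

open MvPolynomial


section Aux
variable {k : Type*} [Field k]

lemma stmt5_degree3 (m : Fin 3 →₀ ℕ) : m.degree = m 0 + m 1 + m 2 := by
  rw [Finsupp.degree_apply, Finset.sum_subset (Finset.subset_univ m.support)
    (fun i _ hi => Finsupp.notMem_support_iff.mp hi)]
  simp [Fin.sum_univ_three]

lemma stmt5_base (i j : Fin 3) (q : MvPolynomial (Fin 3) k)
    (hq : q ∈ Ideal.span {(X i : MvPolynomial (Fin 3) k), X j}) :
    ∀ m ∈ q.support, 1 ≤ m i + m j := by
  obtain ⟨a, b, rfl⟩ := Ideal.mem_span_pair.mp hq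
  intro m hm
  classical
  rcases Finset.mem_union.mp (MvPolynomial.support_add hm) with h | h
  · obtain ⟨m₁, hm₁, m₂, hm₂, rfl⟩ := Finset.mem_add.mp (MvPolynomial.support_mul _ _ h)
    rw [MvPolynomial.support_X] at hm₂
    rw [Finset.mem_singleton] at hm₂
    subst hm₂
    simp only [Finsupp.add_apply, Finsupp.single_eq_same]
    exact le_trans (Nat.le_add_left 1 (m₁ i)) (Nat.le_add_right _ _)
  · obtain ⟨m₁, hm₁, m₂, hm₂, rfl⟩ := Finset.mem_add.mp (MvPolynomial.support_mul _ _ h)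
    rw [MvPolynomial.support_X] at hm₂
    rw [Finset.mem_singleton] at hm₂
    subst hm₂
    simp only [Finsupp.add_apply, Finsupp.single_eq_same]
    exact le_trans (Nat.le_add_left 1 (m₁ j)) (Nat.le_add_left _ _)

lemma stmt5_key (i j : Fin 3) : ∀ (ν : ℕ) (f : MvPolynomial (Fin 3) k),
    f ∈ (Ideal.span {(X i : MvPolynomial (Fin 3) k), X j}) ^ ν →
    ∀ m ∈ f.support, ν ≤ m i + m j := by
  intro ν
  induction ν with
  | zero => exact fun f _ m _ => Nat.zero_le _
  | succ ν ih =>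
    intro f hf
    rw [pow_succ] at hf
    refine Submodule.mul_induction_on hf ?_ ?_
    · intro p hp q hq m hm
      classical
      obtain ⟨m₁, hm₁, m₂, hm₂, rfl⟩ := Finset.mem_add.mp (MvPolynomial.support_mul _ _ hm)
      have h1 : ν ≤ m₁ i + m₁ j := ih p hp m₁ hm₁
      have h2 : 1 ≤ m₂ i + m₂ j := stmt5_base i j q hq m₂ hm₂
      simp only [Finsupp.add_apply]
      omega
    · intro p q hp hq m hm
      rcases Finset.mem_union.mp (MvPolynomial.support_add hm) with h | h
      exacts [hp m h, hq m h]

lemma stmt5_mem_pow (i j : Fin 3) (hij : i ≠ j) (ν : ℕ) (f : MvPolynomial (Fin 3) k)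
    (h : ∀ m ∈ f.support, ν ≤ m i + m j) :
    f ∈ (Ideal.span {(X i : MvPolynomial (Fin 3) k), X j}) ^ ν := by
  rw [← f.support_sum_monomial_coeff]
  refine Ideal.sum_mem _ fun m hm => ?_
  set a := min (m i) ν with ha
  set b := ν - a with hb
  have hmi : a ≤ m i := min_le_left _ _
  have hmj : b ≤ m j := by
    have := h m hm
    omega
  have hab : a + b = ν := by omega
  set s : Fin 3 →₀ ℕ := Finsupp.single i a + Finsupp.single j b with hs
  have hsm : s ≤ m := by
    intro l
    by_cases hli : l = i
    · subst hli
      simp [hs, Finsupp.single_apply, (Ne.symm hij), hij, hmi]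
    · by_cases hlj : l = j
      · subst hlj
        simp [hs, Finsupp.single_apply, (Ne.symm hij), hij, hmj]
      · simp [hs, Finsupp.single_apply, Ne.symm hli, Ne.symm hlj]
  have hdecomp : (m - s) + s = m := tsub_add_cancel_of_le hsm
  have : (monomial m) (coeff m f) = monomial (m - s) (coeff m f) * monomial s 1 := by
    rw [monomial_mul, mul_one, hdecomp]
  rw [this]
  have hXs : (monomial s (1:k)) = X i ^ a * X j ^ b := by
    rw [X_pow_eq_monomial, X_pow_eq_monomial, monomial_mul, one_mul, hs]
  rw [hXs]
  refine Ideal.mul_mem_left _ _ ?_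
  rw [← hab, pow_add]
  exact Submodule.mul_mem_mul
    (Ideal.pow_mem_pow (Ideal.subset_span (by simp)) a)
    (Ideal.pow_mem_pow (Ideal.subset_span (by simp)) b)

end Aux

set_option maxHeartbeats 1600000 in
/-- Let `f ∈ k[x,y,z]` be homogeneous of degree `d`, and let
`ν₁, ν₂, ν₃ ≥ 0` with `ν₂+ν₃ ≤ d`, `ν₁+ν₃ ≤ d`, `ν₁+ν₂ ≤ d`.  If
`f ∈ (y,z)^{ν₁} ∩ (x,z)^{ν₂} ∩ (x,y)^{ν₃}`, then
`σ(f) = x^{ν₁} y^{ν₂} z^{ν₃} · g` for a unique homogeneous polynomial `g` of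
degree `2d − ν₁ − ν₂ − ν₃` with
`g ∈ (y,z)^{d−ν₂−ν₃} ∩ (x,z)^{d−ν₁−ν₃} ∩ (x,y)^{d−ν₁−ν₂}`. -/
theorem stmt5 {k : Type*} [Field k] (d : ℕ) (f : MvPolynomial (Fin 3) k)
    (hf : f.IsHomogeneous d) (ν₁ ν₂ ν₃ : ℕ)
    (h23 : ν₂ + ν₃ ≤ d) (h13 : ν₁ + ν₃ ≤ d) (h12 : ν₁ + ν₂ ≤ d)
    (h₁ : f ∈ (Ideal.span {(X 1 : MvPolynomial (Fin 3) k), X 2}) ^ ν₁)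
    (h₂ : f ∈ (Ideal.span {(X 0 : MvPolynomial (Fin 3) k), X 2}) ^ ν₂)
    (h₃ : f ∈ (Ideal.span {(X 0 : MvPolynomial (Fin 3) k), X 1}) ^ ν₃) :
    ∃! g : MvPolynomial (Fin 3) k,
      aeval ![X 1 * X 2, X 0 * X 2, X 0 * X 1] f =
          (X 0 : MvPolynomial (Fin 3) k) ^ ν₁ * X 1 ^ ν₂ * X 2 ^ ν₃ * g ∧
      g.IsHomogeneous (2 * d - ν₁ - ν₂ - ν₃) ∧
      g ∈ (Ideal.span {(X 1 : MvPolynomial (Fin 3) k), X 2}) ^ (d - ν₂ - ν₃) ∧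
      g ∈ (Ideal.span {(X 0 : MvPolynomial (Fin 3) k), X 2}) ^ (d - ν₁ - ν₃) ∧
      g ∈ (Ideal.span {(X 0 : MvPolynomial (Fin 3) k), X 1}) ^ (d - ν₁ - ν₂) := by
  classical
  have H1 : ∀ m ∈ f.support, ν₁ ≤ m 1 + m 2 := stmt5_key 1 2 ν₁ f h₁
  have H2 : ∀ m ∈ f.support, ν₂ ≤ m 0 + m 2 := stmt5_key 0 2 ν₂ f h₂
  have H3 : ∀ m ∈ f.support, ν₃ ≤ m 0 + m 1 := stmt5_key 0 1 ν₃ f h₃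
  have Hd : ∀ m ∈ f.support, m 0 + m 1 + m 2 = d := by
    intro m hm
    have h := hf (MvPolynomial.mem_support_iff.mp hm)
    rw [show (1 : Fin 3 → ℕ) = fun _ => 1 from rfl, ← Finsupp.degree_eq_weight_one, stmt5_degree3] at h
    exact h
  set w : Fin 3 →₀ ℕ := Finsupp.single 0 ν₁ + Finsupp.single 1 ν₂ + Finsupp.single 2 ν₃ with hw
  set μ : (Fin 3 →₀ ℕ) → (Fin 3 →₀ ℕ) := fun m =>
    Finsupp.single 0 (m 1 + m 2 - ν₁) + Finsupp.single 1 (m 0 + m 2 - ν₂)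
      + Finsupp.single 2 (m 0 + m 1 - ν₃) with hμ
  set g : MvPolynomial (Fin 3) k := ∑ m ∈ f.support, monomial (μ m) (coeff m f) with hg
  have hmon : ((X 0 : MvPolynomial (Fin 3) k) ^ ν₁ * X 1 ^ ν₂ * X 2 ^ ν₃) = monomial w 1 := by
    rw [X_pow_eq_monomial, X_pow_eq_monomial, X_pow_eq_monomial, monomial_mul, monomial_mul]
    simp [hw]
  have hmono : ∀ (s : Fin 3 →₀ ℕ) (c : k),
      (monomial s c : MvPolynomial (Fin 3) k)
        = C c * (X (0:Fin 3) : MvPolynomial (Fin 3) k) ^ s 0 * X 1 ^ s 1 * X 2 ^ s 2 := by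
    intro s c
    rw [monomial_eq, Finsupp.prod_fintype _ _ (fun i => pow_zero _), Fin.prod_univ_three]
    ring
  have hσmono : ∀ (m : Fin 3 →₀ ℕ) (c : k),
      aeval (![X 1 * X 2, X 0 * X 2, X 0 * X 1] : Fin 3 → MvPolynomial (Fin 3) k)
          (monomial m c) =
        (monomial (Finsupp.single (0:Fin 3) (m 1 + m 2) + Finsupp.single 1 (m 0 + m 2)
          + Finsupp.single 2 (m 0 + m 1)) c : MvPolynomial (Fin 3) k) := by
    intro m c
    rw [hmono m c, map_mul, map_mul, map_mul, map_pow, map_pow, map_pow, aeval_C,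
      aeval_X, aeval_X, aeval_X,
      hmono (Finsupp.single (0:Fin 3) (m 1 + m 2) + Finsupp.single 1 (m 0 + m 2)
        + Finsupp.single 2 (m 0 + m 1)) c]
    simp [MvPolynomial.algebraMap_eq, Finsupp.single_apply]
    ring
  have hσf : aeval ![X 1 * X 2, X 0 * X 2, X 0 * X 1] f = monomial w 1 * g := by
    conv_lhs => rw [← f.support_sum_monomial_coeff]
    rw [map_sum, hg, Finset.mul_sum]
    refine Finset.sum_congr rfl fun m hm => ?_
    rw [hσmono, monomial_mul, one_mul]
    have h1 := H1 m hm; have h2 := H2 m hm; have h3 := H3 m hm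
    have hfs : Finsupp.single (0:Fin 3) (m 1 + m 2) + Finsupp.single 1 (m 0 + m 2)
        + Finsupp.single 2 (m 0 + m 1) = w + μ m := by
      ext l
      fin_cases l <;> simp [hw, hμ, Finsupp.single_apply] <;> omega
    rw [hfs]
  have hdeg : g.IsHomogeneous (2 * d - ν₁ - ν₂ - ν₃) := by
    rw [hg]
    apply MvPolynomial.IsHomogeneous.sum
    intro m hm
    apply isHomogeneous_monomial
    have h1 := H1 m hm; have h2 := H2 m hm; have h3 := H3 m hm; have hd := Hd m hm
    rw [stmt5_degree3]
    simp [hμ, Finsupp.add_apply, Finsupp.single_apply]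
    omega
  have hmem : ∀ (i j : Fin 3), i ≠ j → ∀ ν : ℕ,
      (∀ m ∈ f.support, ν ≤ μ m i + μ m j) →
      g ∈ (Ideal.span {(X i : MvPolynomial (Fin 3) k), X j}) ^ ν := by
    intro i j hij ν hcond
    rw [hg]
    refine Ideal.sum_mem _ fun m hm => ?_
    apply stmt5_mem_pow i j hij
    intro m' hm'
    rw [MvPolynomial.support_monomial] at hm'
    by_cases hc : coeff m f = 0
    · simp [hc] at hm'
    · simp only [hc, if_false, Finset.mem_singleton] at hm'
      subst hm'
      exact hcond m hm
  have hg1 : g ∈ (Ideal.span {(X 1 : MvPolynomial (Fin 3) k), X 2}) ^ (d - ν₂ - ν₃) := by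
    apply hmem 1 2 (by decide)
    intro m hm
    have h2 := H2 m hm; have h3 := H3 m hm; have hd := Hd m hm
    simp [hμ, Finsupp.add_apply, Finsupp.single_apply]
    omega
  have hg2 : g ∈ (Ideal.span {(X 0 : MvPolynomial (Fin 3) k), X 2}) ^ (d - ν₁ - ν₃) := by
    apply hmem 0 2 (by decide)
    intro m hm
    have h1 := H1 m hm; have h3 := H3 m hm; have hd := Hd m hm
    simp [hμ, Finsupp.add_apply, Finsupp.single_apply]
    omega
  have hg3 : g ∈ (Ideal.span {(X 0 : MvPolynomial (Fin 3) k), X 1}) ^ (d - ν₁ - ν₂) := by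
    apply hmem 0 1 (by decide)
    intro m hm
    have h1 := H1 m hm; have h2 := H2 m hm; have hd := Hd m hm
    simp [hμ, Finsupp.add_apply, Finsupp.single_apply]
    omega
  refine ⟨g, ⟨?_, hdeg, hg1, hg2, hg3⟩, ?_⟩
  · rw [hσf, hmon]
  · rintro g' ⟨hEq, -, -, -, -⟩
    have hcancel : monomial w (1:k) * g' = monomial w 1 * g := by
      rw [← hmon, ← hEq, hσf, hmon]
    exact mul_left_cancel₀ (by simp [MvPolynomial.monomial_eq_zero]) hcancel
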